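/- Let G be the semidirect product of the elementary abelian group (ZMod 2)⁴ by the cyclic group ZMod 3, where the generator of ZMod 3 acts on (ZMod 2)⁴ by the linear automorphism (a₁, a₂, a₃, a₄) ↦ (a₂, a₁ + a₂, a₄, a₃ + a₄). Then there exists an injective group homomorphism from G into A₄ × A₄, where A₄ is the alternating group on four letters. (This group G is the group with GAP Id (48, 50).) -/

import Mathlib

/-- The homomorphism `AddAut A →* MulAut (Multiplicative A)`. -/
def addAutToMulAut {A : Type} [AddGroup A] :
    Multiplicative (AddAut A) →* MulAut (Multiplicative A) where
  toFun f := AddEquiv.toMultiplicative f.toAdd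
  map_one' := rfl
  map_mul' _ _ := rfl

/-- The homomorphism `Multiplicative (ZMod n) →* G` sending the generator to an
element `g` with `g ^ n = 1`. -/
def zmodHom {n : ℕ} {G : Type} [Group G] (g : G) (hg : g ^ n = 1) :
    Multiplicative (ZMod n) →* G :=
  AddMonoidHom.toMultiplicativeLeft <|
    ZMod.lift n ⟨zmultiplesHom (Additive G) (Additive.ofMul g), by simpa using congrArg Additive.ofMul hg⟩

/-- The block-diagonal automorphism `(a₁, a₂, a₃, a₄) ↦ (a₂, a₁ + a₂, a₄, a₃ + a₄)`
of `(ZMod 2)⁴` (two diagonal blocks `[[0,1],[1,1]]` over `𝔽₂`). -/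
def tau : AddAut (ZMod 2 × ZMod 2 × ZMod 2 × ZMod 2) where
  toFun p := (p.2.1, p.1 + p.2.1, p.2.2.2, p.2.2.1 + p.2.2.2)
  invFun p := (p.1 + p.2.1, p.1, p.2.2.1 + p.2.2.2, p.2.2.1)
  left_inv := by decide
  right_inv := by decide
  map_add' := by decide

lemma tau_pow_three : (addAutToMulAut (Multiplicative.ofAdd tau)) ^ 3 = 1 := by
  have h : (Multiplicative.ofAdd tau) ^ 3 = 1 := by
    apply Multiplicative.toAdd.injective
    exact AddEquiv.ext (by decide)
  rw [← map_pow, h, map_one]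

/-- The action of `ZMod 3` on `(ZMod 2)⁴` given by the block-diagonal matrix. -/
def actC3 : Multiplicative (ZMod 3) →*
    MulAut (Multiplicative (ZMod 2 × ZMod 2 × ZMod 2 × ZMod 2)) :=
  zmodHom (addAutToMulAut (Multiplicative.ofAdd tau)) tau_pow_three

private abbrev A4 := alternatingGroup (Fin 4)
private abbrev V := Multiplicative (ZMod 2 × ZMod 2 × ZMod 2 × ZMod 2)

private def sig : A4 := ⟨c[0,1,2], by rw [Equiv.Perm.mem_alternatingGroup]; decide⟩
private def pa : A4 := ⟨c[0,1] * c[2,3], by rw [Equiv.Perm.mem_alternatingGroup]; decide⟩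
private def pb : A4 := ⟨c[0,3] * c[1,2], by rw [Equiv.Perm.mem_alternatingGroup]; decide⟩

private def phi : V →* A4 × A4 where
  toFun v :=
    (pa ^ v.toAdd.1.val * pb ^ v.toAdd.2.1.val,
     pa ^ v.toAdd.2.2.1.val * pb ^ v.toAdd.2.2.2.val)
  map_one' := by decide
  map_mul' := by decide

private def psi : Multiplicative (ZMod 3) →* A4 × A4 where
  toFun c := (sig ^ c.toAdd.val, sig ^ c.toAdd.val)
  map_one' := by decide
  map_mul' := by decide

private lemma compat : ∀ g, phi.comp ((actC3 g) : MulAut V).toMonoidHom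
    = (MulAut.conj (psi g)).toMonoidHom.comp phi := by
  intro g
  apply MonoidHom.ext
  intro x
  show phi ((actC3 g) x) = MulAut.conj (psi g) (phi x)
  revert g x
  decide

set_option synthInstance.maxSize 2000 in
/-- The group `(ZMod 2)⁴ ⋊ ZMod 3` (GAP Id `(48, 50)`) embeds into `A₄ × A₄`. -/
theorem semidirect_embeds_alternating_prod :
    ∃ f : (Multiplicative (ZMod 2 × ZMod 2 × ZMod 2 × ZMod 2) ⋊[actC3]
        Multiplicative (ZMod 3)) →*
      alternatingGroup (Fin 4) × alternatingGroup (Fin 4),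
      Function.Injective f := by
  refine ⟨SemidirectProduct.lift phi psi compat, ?_⟩
  rw [injective_iff_map_eq_one]
  rintro ⟨v, c⟩ h
  have h' : phi v * psi c = 1 := h
  have key : ∀ v : V, ∀ c : Multiplicative (ZMod 3),
      phi v * psi c = 1 → v = 1 ∧ c = 1 := by decide
  obtain ⟨hv, hc⟩ := key v c h'
  exact SemidirectProduct.ext hv hc
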